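/- Let W be a q-ary DMC (q = 2^r) and let v, v' ∈ ZMod q be nonzero with wt(v) ≥ wt(v'). For any δ' > 0: if Z_v(W) ≥ 1 − δ'·q^{−3}, then Z_{v'}(W) ≥ 1 − δ'. -/

import Mathlib

open Finset

instance (r : ℕ) : NeZero (2 ^ r) := ⟨pow_ne_zero r two_ne_zero⟩

/-- The Bhattacharyya parameter `Z(W; x, x') = ∑_y √(W x y · W x' y)` of a pair of inputs. -/
noncomputable def bhat {q : ℕ} {Y : Type*} [Fintype Y] (W : ZMod q → Y → ℝ) (x x' : ZMod q) : ℝ :=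
  ∑ y, Real.sqrt (W x y * W x' y)

/-- `Z_v(W) = (1/q) ∑_x Z(W; x, x+v)`. -/
noncomputable def Zv {q : ℕ} [NeZero q] {Y : Type*} [Fintype Y] (W : ZMod q → Y → ℝ) (v : ZMod q) : ℝ :=
  (1 / (q : ℝ)) * ∑ x, bhat W x (x + v)

/-- `W` is a discrete memoryless channel: nonnegative entries and rows summing to one. -/
def IsDMC {q : ℕ} {Y : Type*} [Fintype Y] (W : ZMod q → Y → ℝ) : Prop :=
  (∀ x y, 0 ≤ W x y) ∧ ∀ x, ∑ y, W x y = 1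

/-- The ordered weight `wt(v) = r - ν₂(v̄)` of `v : ZMod (2^r)`. -/
def owt (r : ℕ) {q : ℕ} (v : ZMod q) : ℕ := r - padicValNat 2 v.val

/-- The `i`-th average Bhattacharyya distance `Z_i(W) = 2^{-(i-1)} ∑_{v ∈ X_i} Z_v(W)`. -/
noncomputable def Zi (r : ℕ) {Y : Type*} [Fintype Y] (W : ZMod (2 ^ r) → Y → ℝ) (i : ℕ) : ℝ :=
  (1 / 2 ^ (i - 1) : ℝ) *
    ∑ v ∈ univ.filter (fun v : ZMod (2 ^ r) => v ≠ 0 ∧ owt r v = i), Zv W v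

/-- The symmetric capacity `I(W)` (with `0 log 0 = 0`). -/
noncomputable def symCap {q : ℕ} [NeZero q] {Y : Type*} [Fintype Y] (W : ZMod q → Y → ℝ) : ℝ :=
  ∑ x, ∑ y, (1 / (q : ℝ)) * W x y *
    Real.logb 2 (W x y / ∑ x', (1 / (q : ℝ)) * W x' y)

/-- `Z_max^{(j)}(W) = max_{v ∈ X_j} Z_v(W)` (as a supremum over the finite nonempty class `X_j`). -/
noncomputable def Zmax (r : ℕ) {Y : Type*} [Fintype Y] (W : ZMod (2 ^ r) → Y → ℝ) (j : ℕ) : ℝ :=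
  ⨆ v : {v : ZMod (2 ^ r) // v ≠ 0 ∧ owt r v = j}, Zv W v.1

/-- The Arıkan minus transform `W⁻ u₁ (y₁,y₂) = (1/q) ∑_{u₂} W (u₁+u₂) y₁ · W u₂ y₂`. -/
noncomputable def Wminus {q : ℕ} [NeZero q] {Y : Type*} [Fintype Y] (W : ZMod q → Y → ℝ) :
    ZMod q → Y × Y → ℝ :=
  fun u₁ p => (1 / (q : ℝ)) * ∑ u₂, W (u₁ + u₂) p.1 * W u₂ p.2

/-- The Arıkan plus transform `W⁺ u₂ (y₁,y₂,u₁) = (1/q) W (u₁+u₂) y₁ · W u₂ y₂`. -/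
noncomputable def Wplus {q : ℕ} [NeZero q] {Y : Type*} [Fintype Y] (W : ZMod q → Y → ℝ) :
    ZMod q → Y × Y × ZMod q → ℝ :=
  fun u₂ p => (1 / (q : ℝ)) * W (p.2.2 + u₂) p.1 * W u₂ p.2.1

/-- The restricted channel `W^{[r-k]}` for the `r-k` least significant bits. -/
noncomputable def Wres (r k : ℕ) {Y : Type*} [Fintype Y] (W : ZMod (2 ^ r) → Y → ℝ) :
    ZMod (2 ^ (r - k)) → Y → ℝ :=
  fun u y => (1 / 2 ^ k : ℝ) *
    ∑ x ∈ univ.filter (fun x : ZMod (2 ^ r) => x.val % 2 ^ (r - k) = u.val), W x y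

set_option maxHeartbeats 1000000 in
/-- if `wt(v) ≥ wt(v')` and `Z_v(W) ≥ 1 - δ' q^{-3}` then `Z_{v'}(W) ≥ 1 - δ'`. -/
theorem Zv_order_domination (r : ℕ) (hr : 1 ≤ r) {Y : Type*} [Fintype Y] [Nonempty Y]
    (W : ZMod (2 ^ r) → Y → ℝ) (hW : IsDMC W) (v v' : ZMod (2 ^ r)) (hv : v ≠ 0) (hv' : v' ≠ 0)
    (hwt : owt r v' ≤ owt r v) (δ' : ℝ) (hδ' : 0 < δ')
    (h : 1 - δ' / (2 ^ r : ℝ) ^ 3 ≤ Zv W v) :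
    1 - δ' ≤ Zv W v' := by
  classical
  have hq1 : 1 ≤ 2 ^ r := Nat.one_le_two_pow
  have hq0 : (0 : ℝ) < ((2 ^ r : ℕ) : ℝ) := by positivity
  set ε : ℝ := δ' / ((2 ^ r : ℕ) : ℝ) ^ 3 with hε
  have hε0 : 0 < ε := by positivity
  have hεh : 1 - ε ≤ Zv W v := by
    refine le_trans (le_of_eq ?_) h
    rw [hε]; push_cast; ring
  -- the square-root embedding
  set g : ZMod (2 ^ r) → EuclideanSpace ℝ Y := fun x => WithLp.toLp 2 (fun y => Real.sqrt (W x y)) with hg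
  have hnorm : ∀ x x' : ZMod (2 ^ r), ‖g x - g x'‖ ^ 2 = 2 - 2 * bhat W x x' := by
    intro x x'
    have h1 : ‖g x - g x'‖ ^ 2 = ∑ y, (Real.sqrt (W x y) - Real.sqrt (W x' y)) ^ 2 := by
      rw [EuclideanSpace.norm_eq, Real.sq_sqrt (by positivity)]
      refine Finset.sum_congr rfl fun y _ => ?_
      simp [hg, sq_abs]
    rw [h1]
    have h2 : ∀ y : Y, (Real.sqrt (W x y) - Real.sqrt (W x' y)) ^ 2
        = W x y + W x' y - 2 * Real.sqrt (W x y * W x' y) := by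
      intro y
      rw [sub_sq, Real.sq_sqrt (hW.1 x y), Real.sq_sqrt (hW.1 x' y),
        Real.sqrt_mul (hW.1 x y)]
      ring
    rw [Finset.sum_congr rfl fun y _ => h2 y]
    rw [Finset.sum_sub_distrib, Finset.sum_add_distrib, hW.2 x, hW.2 x',
      ← Finset.mul_sum]
    unfold bhat
    ring
  have hble : ∀ x x' : ZMod (2 ^ r), bhat W x x' ≤ 1 := by
    intro x x'
    nlinarith [hnorm x x', sq_nonneg ‖g x - g x'‖]
  -- step bound
  have hcard : Fintype.card (ZMod (2 ^ r)) = 2 ^ r := ZMod.card (2 ^ r)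
  have hsum : ((2 ^ r : ℕ) : ℝ) * (1 - ε) ≤ ∑ x : ZMod (2 ^ r), bhat W x (x + v) := by
    rw [Zv] at hεh
    calc ((2 ^ r : ℕ) : ℝ) * (1 - ε)
        ≤ ((2 ^ r : ℕ) : ℝ) * ((1 / ((2 ^ r : ℕ) : ℝ)) * ∑ x, bhat W x (x + v)) :=
          mul_le_mul_of_nonneg_left hεh hq0.le
      _ = ∑ x, bhat W x (x + v) := by field_simp
  have hstep : ∀ x : ZMod (2 ^ r), 1 - ((2 ^ r : ℕ) : ℝ) * ε ≤ bhat W x (x + v) := by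
    intro x₀
    have hsplit : ∑ x : ZMod (2 ^ r), bhat W x (x + v)
        = bhat W x₀ (x₀ + v) + ∑ x ∈ univ.erase x₀, bhat W x (x + v) :=
      (Finset.add_sum_erase univ _ (mem_univ x₀)).symm
    have hrest : ∑ x ∈ univ.erase x₀, bhat W x (x + v) ≤ ((2 ^ r : ℕ) : ℝ) - 1 := by
      calc ∑ x ∈ univ.erase x₀, bhat W x (x + v) ≤ ∑ _x ∈ univ.erase x₀, (1 : ℝ) :=
            Finset.sum_le_sum fun x _ => hble x (x + v)
        _ = ((univ.erase x₀).card : ℝ) := by simp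
        _ = ((2 ^ r : ℕ) : ℝ) - 1 := by
            rw [Finset.card_erase_of_mem (mem_univ x₀), Finset.card_univ, hcard,
              Nat.cast_sub hq1, Nat.cast_one]
    nlinarith [hsum, hsplit, hrest]
  have hstepnorm : ∀ x : ZMod (2 ^ r),
      ‖g x - g (x + v)‖ ≤ Real.sqrt (2 * ((2 ^ r : ℕ) : ℝ) * ε) := by
    intro x
    have h1 : ‖g x - g (x + v)‖ ^ 2 ≤ 2 * ((2 ^ r : ℕ) : ℝ) * ε := by
      rw [hnorm]; nlinarith [hstep x]
    calc ‖g x - g (x + v)‖ = Real.sqrt (‖g x - g (x + v)‖ ^ 2) :=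
          (Real.sqrt_sq (norm_nonneg _)).symm
      _ ≤ Real.sqrt (2 * ((2 ^ r : ℕ) : ℝ) * ε) := Real.sqrt_le_sqrt h1
  -- chain bound
  have hchain : ∀ (m : ℕ) (x : ZMod (2 ^ r)),
      ‖g x - g (x + (m : ZMod (2 ^ r)) * v)‖ ≤ (m : ℝ) * Real.sqrt (2 * ((2 ^ r : ℕ) : ℝ) * ε) := by
    intro m
    induction m with
    | zero => intro x; simp
    | succ m ih =>
        intro x
        have key : x + ((m + 1 : ℕ) : ZMod (2 ^ r)) * v = (x + (m : ZMod (2 ^ r)) * v) + v := by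
          push_cast; ring
        rw [key]
        calc ‖g x - g ((x + (m : ZMod (2 ^ r)) * v) + v)‖
            ≤ ‖g x - g (x + (m : ZMod (2 ^ r)) * v)‖
              + ‖g (x + (m : ZMod (2 ^ r)) * v) - g ((x + (m : ZMod (2 ^ r)) * v) + v)‖ := by
              have := dist_triangle (g x) (g (x + (m : ZMod (2 ^ r)) * v))
                (g ((x + (m : ZMod (2 ^ r)) * v) + v))
              simpa [dist_eq_norm] using this
          _ ≤ (m : ℝ) * Real.sqrt (2 * ((2 ^ r : ℕ) : ℝ) * ε)
              + Real.sqrt (2 * ((2 ^ r : ℕ) : ℝ) * ε) := add_le_add (ih x) (hstepnorm _)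
          _ = ((m + 1 : ℕ) : ℝ) * Real.sqrt (2 * ((2 ^ r : ℕ) : ℝ) * ε) := by push_cast; ring
  -- number theory: v' = c * v
  have hvval : v.val ≠ 0 := fun hh => hv (by rwa [← ZMod.val_eq_zero])
  have hv'val : v'.val ≠ 0 := fun hh => hv' (by rwa [← ZMod.val_eq_zero])
  simp only [owt] at hwt
  set a : ℕ := padicValNat 2 v.val with hadef
  set a' : ℕ := padicValNat 2 v'.val with ha'def
  have hva : 2 ^ a ∣ v.val := pow_padicValNat_dvd
  have hv'a : 2 ^ a' ∣ v'.val := pow_padicValNat_dvd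
  have har : a < r := by
    have h1 : 2 ^ a ≤ v.val := Nat.le_of_dvd (Nat.pos_of_ne_zero hvval) hva
    have h2 : v.val < 2 ^ r := ZMod.val_lt v
    exact (Nat.pow_lt_pow_iff_right (by norm_num)).mp (lt_of_le_of_lt h1 h2)
  have ha'r : a' < r := by
    have h1 : 2 ^ a' ≤ v'.val := Nat.le_of_dvd (Nat.pos_of_ne_zero hv'val) hv'a
    have h2 : v'.val < 2 ^ r := ZMod.val_lt v'
    exact (Nat.pow_lt_pow_iff_right (by norm_num)).mp (lt_of_le_of_lt h1 h2)
  have haa' : a ≤ a' := by omega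
  set t : ℕ := v.val / 2 ^ a with htdef
  have ht : 2 ^ a * t = v.val := Nat.mul_div_cancel' hva
  have htodd : ¬ 2 ∣ t := by
    intro htd
    have : 2 ^ (a + 1) ∣ v.val := by
      rw [← ht, pow_succ]
      exact mul_dvd_mul_left _ htd
    exact pow_succ_padicValNat_not_dvd hvval this
  have htu : IsUnit (t : ZMod (2 ^ r)) := by
    rw [ZMod.isUnit_iff_coprime]
    exact Nat.Coprime.pow_right r (((Nat.prime_two.coprime_iff_not_dvd).mpr htodd).symm)
  obtain ⟨u, hu⟩ := htu
  set s : ℕ := v'.val / 2 ^ a with hsdef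
  have hs : 2 ^ a * s = v'.val := Nat.mul_div_cancel' (dvd_trans (pow_dvd_pow 2 haa') hv'a)
  set c : ZMod (2 ^ r) := (s : ZMod (2 ^ r)) * ↑u⁻¹ with hcdef
  have hcv : c * v = v' := by
    have hvz : ((v.val : ℕ) : ZMod (2 ^ r)) = v := by simp [ZMod.natCast_val, ZMod.cast_id]
    have hv'z : ((v'.val : ℕ) : ZMod (2 ^ r)) = v' := by simp [ZMod.natCast_val, ZMod.cast_id]
    have e1 : v = (2 ^ a : ZMod (2 ^ r)) * (t : ZMod (2 ^ r)) := by
      rw [← hvz, ← ht]; push_cast; ring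
    have e2 : v' = (2 ^ a : ZMod (2 ^ r)) * (s : ZMod (2 ^ r)) := by
      rw [← hv'z, ← hs]; push_cast; ring
    rw [hcdef, e1, e2, ← hu]
    have huu : (↑u⁻¹ * ↑u : ZMod (2 ^ r)) = 1 := by
      rw [← Units.val_mul, inv_mul_cancel]; rfl
    calc (s : ZMod (2 ^ r)) * ↑u⁻¹ * ((2 ^ a : ZMod (2 ^ r)) * ↑u)
        = (2 ^ a : ZMod (2 ^ r)) * (s : ZMod (2 ^ r)) * (↑u⁻¹ * ↑u) := by ring
      _ = (2 ^ a : ZMod (2 ^ r)) * (s : ZMod (2 ^ r)) := by rw [huu, mul_one]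
  -- assemble
  have hfinal : ∀ x : ZMod (2 ^ r), 1 - δ' ≤ bhat W x (x + v') := by
    intro x
    have hcval : ((c.val : ℕ) : ZMod (2 ^ r)) = c := by simp [ZMod.natCast_val, ZMod.cast_id]
    have hvv' : x + v' = x + (c.val : ZMod (2 ^ r)) * v := by rw [hcval, hcv]
    have hb1 : ‖g x - g (x + v')‖ ≤ (c.val : ℝ) * Real.sqrt (2 * ((2 ^ r : ℕ) : ℝ) * ε) := by
      rw [hvv']; exact hchain c.val x
    have hcq : (c.val : ℝ) ≤ ((2 ^ r : ℕ) : ℝ) := by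
      exact_mod_cast (ZMod.val_lt c).le
    have hb2 : ‖g x - g (x + v')‖ ≤ ((2 ^ r : ℕ) : ℝ) * Real.sqrt (2 * ((2 ^ r : ℕ) : ℝ) * ε) :=
      hb1.trans (mul_le_mul_of_nonneg_right hcq (Real.sqrt_nonneg _))
    have hsq : ‖g x - g (x + v')‖ ^ 2 ≤ ((2 ^ r : ℕ) : ℝ) ^ 2 * (2 * ((2 ^ r : ℕ) : ℝ) * ε) := by
      have hnn : (0 : ℝ) ≤ ‖g x - g (x + v')‖ := norm_nonneg _
      have hs2 := Real.sq_sqrt (show (0:ℝ) ≤ 2 * ((2 ^ r : ℕ) : ℝ) * ε by positivity)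
      nlinarith [Real.sqrt_nonneg (2 * ((2 ^ r : ℕ) : ℝ) * ε)]
    have hq3 : ((2 ^ r : ℕ) : ℝ) ^ 2 * (2 * ((2 ^ r : ℕ) : ℝ) * ε) = 2 * δ' := by
      rw [hε]; field_simp
    rw [hnorm] at hsq
    nlinarith [hsq, hq3]
  rw [Zv]
  calc (1 : ℝ) - δ' = (1 / ((2 ^ r : ℕ) : ℝ)) * (((2 ^ r : ℕ) : ℝ) * (1 - δ')) := by
        field_simp
    _ ≤ (1 / ((2 ^ r : ℕ) : ℝ)) * ∑ x : ZMod (2 ^ r), bhat W x (x + v') := by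
        refine mul_le_mul_of_nonneg_left ?_ (by positivity)
        calc ((2 ^ r : ℕ) : ℝ) * (1 - δ') = ∑ _x : ZMod (2 ^ r), (1 - δ') := by
              simp [Finset.sum_const, Finset.card_univ, hcard, nsmul_eq_mul]; ring
          _ ≤ ∑ x : ZMod (2 ^ r), bhat W x (x + v') := Finset.sum_le_sum fun x _ => hfinal x
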